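/- Let f(y) = Σᵢ wᵢ φ(y - xᵢ) be a finite Gaussian mixture with weights wᵢ > 0 and standard normal density φ. If y₀ is a global maximum of f, then there exists an index k with |y₀ - xₖ| ≤ 1. -/

import Mathlib

open Real Finset

noncomputable def stdNormalPdf (t : ℝ) : ℝ := (Real.sqrt (2 * π))⁻¹ * Real.exp (-t ^ 2 / 2)

private noncomputable def gauss (t : ℝ) : ℝ := Real.exp (-t ^ 2 / 2)

private lemma gauss_deriv (t : ℝ) : HasDerivAt gauss (-t * gauss t) t := by
  have h1 : HasDerivAt (fun s : ℝ => -s ^ 2 / 2) (-t) t := by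
    have := ((hasDerivAt_pow 2 t).neg).div_const 2
    refine this.congr_deriv ?_
    push_cast; ring
  have := h1.exp
  refine this.congr_deriv ?_
  unfold gauss; ring

private lemma gauss_deriv2 (t : ℝ) :
    HasDerivAt (fun s => -s * gauss s) ((t ^ 2 - 1) * gauss t) t := by
  have := ((hasDerivAt_id t).neg).mul (gauss_deriv t)
  refine this.congr_deriv ?_
  simp only [Pi.neg_apply, id_eq]
  ring

private lemma gauss_strict {a b : ℝ} (hab : a < b) (h : ∀ t ∈ Set.Icc a b, 1 < |t|) :
    gauss ((a + b) / 2) < (gauss a + gauss b) / 2 := by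
  have hderiv : deriv gauss = fun s => -s * gauss s := by
    funext s; exact (gauss_deriv s).deriv
  have sc : StrictConvexOn ℝ (Set.Icc a b) gauss := by
    apply strictConvexOn_of_deriv2_pos (convex_Icc a b)
    · exact (Real.continuous_exp.comp (by continuity)).continuousOn
    · intro s hs
      have hs' : s ∈ Set.Icc a b := by
        rw [interior_Icc] at hs; exact Set.mem_Icc_of_Ioo hs
      have h1 : 1 < |s| := h s hs'
      have h2 : 1 < s ^ 2 := by nlinarith [sq_abs s]
      have : deriv (deriv gauss) s = (s ^ 2 - 1) * gauss s := by
        rw [hderiv]; exact (gauss_deriv2 s).deriv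
      simp only [Function.iterate_succ, Function.iterate_zero, Function.comp_apply, id_eq]
      rw [this]
      exact mul_pos (by linarith) (Real.exp_pos _)
  have ha : a ∈ Set.Icc a b := Set.left_mem_Icc.2 hab.le
  have hb : b ∈ Set.Icc a b := Set.right_mem_Icc.2 hab.le
  have := sc.2 ha hb hab.ne (by norm_num : (0:ℝ) < 1/2) (by norm_num : (0:ℝ) < 1/2) (by norm_num)
  simp only [smul_eq_mul] at this
  calc gauss ((a + b) / 2) = gauss (1/2 * a + 1/2 * b) := by ring_nf
    _ < 1/2 * gauss a + 1/2 * gauss b := this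
    _ = (gauss a + gauss b) / 2 := by ring

private lemma pdf_strict {a b : ℝ} (hab : a < b) (h : ∀ t ∈ Set.Icc a b, 1 < |t|) :
    stdNormalPdf ((a + b) / 2) < (stdNormalPdf a + stdNormalPdf b) / 2 := by
  have hc : 0 < (Real.sqrt (2 * π))⁻¹ := by
    rw [inv_pos]
    exact Real.sqrt_pos.2 (by positivity)
  have := gauss_strict hab h
  unfold stdNormalPdf
  unfold gauss at this
  nlinarith

theorem stmt_1 (n : ℕ) (hn : 1 ≤ n) (w x : Fin n → ℝ) (hw : ∀ i, 0 < w i)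
    (f : ℝ → ℝ) (hf : ∀ y, f y = ∑ i, w i * stdNormalPdf (y - x i))
    (y₀ : ℝ) (hmax : ∀ y, f y ≤ f y₀) :
    ∃ k : Fin n, |y₀ - x k| ≤ 1 := by
  by_contra hcon
  push_neg at hcon
  haveI : Nonempty (Fin n) := ⟨⟨0, hn⟩⟩
  -- minimal distance
  obtain ⟨k, hk⟩ := Finset.exists_min_image Finset.univ (fun i => |y₀ - x i|) Finset.univ_nonempty
  set δ : ℝ := (|y₀ - x k| - 1) / 2 with hδdef
  have hδ : 0 < δ := by
    have := hcon k
    simp only [hδdef]; linarith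
  have hdist : ∀ i, ∀ t ∈ Set.Icc (y₀ - δ - x i) (y₀ + δ - x i), 1 < |t| := by
    intro i t ht
    have hki : |y₀ - x k| ≤ |y₀ - x i| := hk.2 i (Finset.mem_univ i)
    have h1 : 1 + 2 * δ ≤ |y₀ - x i| := by simp only [hδdef] at *; linarith [abs_nonneg (y₀ - x k)]
    have h2 : |t - (y₀ - x i)| ≤ δ := by
      rw [abs_le]; constructor <;> [linarith [ht.1]; linarith [ht.2]]
    have := abs_sub_abs_le_abs_sub (y₀ - x i) t
    have h3 : |y₀ - x i - t| ≤ δ := by rwa [abs_sub_comm] at h2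
    linarith
  have key : ∀ i : Fin n, stdNormalPdf (y₀ - x i) <
      (stdNormalPdf (y₀ - δ - x i) + stdNormalPdf (y₀ + δ - x i)) / 2 := by
    intro i
    have hab : y₀ - δ - x i < y₀ + δ - x i := by linarith
    have := pdf_strict hab (hdist i)
    have hmid : (y₀ - δ - x i + (y₀ + δ - x i)) / 2 = y₀ - x i := by ring
    rwa [hmid] at this
  have hsum : f y₀ < (f (y₀ - δ) + f (y₀ + δ)) / 2 := by
    rw [hf y₀, hf (y₀ - δ), hf (y₀ + δ)]
    have hlt : ∑ i, w i * stdNormalPdf (y₀ - x i) <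
        ∑ i, w i * ((stdNormalPdf (y₀ - δ - x i) + stdNormalPdf (y₀ + δ - x i)) / 2) := by
      apply Finset.sum_lt_sum_of_nonempty Finset.univ_nonempty
      intro i _
      exact mul_lt_mul_of_pos_left (key i) (hw i)
    have heq : ∑ i, w i * ((stdNormalPdf (y₀ - δ - x i) + stdNormalPdf (y₀ + δ - x i)) / 2) =
        ((∑ i, w i * stdNormalPdf (y₀ - δ - x i)) + ∑ i, w i * stdNormalPdf (y₀ + δ - x i)) / 2 := by
      rw [← Finset.sum_add_distrib, Finset.sum_div]
      apply Finset.sum_congr rfl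
      intro i _; ring
    linarith [heq ▸ hlt]
  have h1 := hmax (y₀ - δ)
  have h2 := hmax (y₀ + δ)
  linarith
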